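/- The Thomas–Fermi energy satisfies E^{TF}(Z) = Z^{7/3} E^{TF}(1), where E^{TF}(Z) := inf { 𝓔_Z^{TF}(ρ) : ρ ∈ 𝓘 }. -/

import Mathlib

open MeasureTheory Real Filter

noncomputable section

abbrev E3 := EuclideanSpace ℝ (Fin 3)

/-- The Coulomb pairing `D(ρ,σ) = (1/2)∫∫ ρ(x)σ(y)/|x−y| dx dy`. -/
def coulD (ρ σ : E3 → ℝ) : ℝ := (1/2) * ∫ x : E3, ∫ y : E3, ρ x * σ y / ‖x - y‖

/-- The Thomas–Fermi constant `γ_TF = (6π²/q)^{2/3}`. -/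
def gammaTF (q : ℕ) : ℝ := (6 * Real.pi ^ 2 / q) ^ ((2:ℝ)/3)

/-- The atomic Thomas–Fermi functional. -/
def TFfunctional (q : ℕ) (Z : ℝ) (ρ : E3 → ℝ) : ℝ :=
  (∫ x : E3, ((3/10) * gammaTF q * ρ x ^ ((5:ℝ)/3) - (Z / ‖x‖) * ρ x)) + coulD ρ ρ

/-- The natural domain `𝓘` of the Thomas–Fermi functional: nonnegative densities in
`L^{5/3}(ℝ³)` with finite Coulomb self-energy (and finite attraction energy). -/
def TFdomain : Set (E3 → ℝ) :=
  {ρ | Measurable ρ ∧ (∀ x, 0 ≤ ρ x) ∧ MemLp ρ (ENNReal.ofReal (5/3)) ∧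
    Integrable (fun x => ρ x / ‖x‖) ∧
    Integrable (fun p : E3 × E3 => ρ p.1 * ρ p.2 / ‖p.1 - p.2‖)}

/-- The Thomas–Fermi energy `E^{TF}(Z) = inf 𝓔_Z^{TF}(𝓘)`. -/
def TFenergy (q : ℕ) (Z : ℝ) : ℝ := sInf (TFfunctional q Z '' TFdomain)

/-! ### Auxiliary material for the scaling proof -/

open Pointwise

/-- The scaling `ρ ↦ ρ_Z`, `ρ_Z(x) = Z² ρ(Z^{1/3} x)`. -/
def tfScale (Z : ℝ) (ρ : E3 → ℝ) : E3 → ℝ := fun x => Z ^ 2 * ρ (Z ^ ((1:ℝ)/3) • x)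

instance : (volume : Measure (E3 × E3)).IsAddHaarMeasure :=
  Measure.prod.instIsAddHaarMeasure (volume : Measure E3) (volume : Measure E3)

lemma cube_rpow_third {Z : ℝ} (hZ : 0 < Z) : (Z ^ ((1:ℝ)/3)) ^ (3:ℕ) = Z := by
  rw [← Real.rpow_natCast (Z ^ ((1:ℝ)/3)) 3, ← Real.rpow_mul hZ.le]
  norm_num

lemma key_div {c : ℝ} (hc : c ≠ 0) (A t : ℝ) : c * (A / (c * t)) = A / t := by
  rw [mul_div_assoc']
  exact mul_div_mul_left A t hc

/-- Change of variables `x ↦ c x` on `ℝ³` with `c³ = Z`. -/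
lemma integral_scale {c Z : ℝ} (hZ : 0 < Z) (hc : c ^ (3:ℕ) = Z) (f : E3 → ℝ) :
    ∫ x : E3, f (c • x) = Z⁻¹ * ∫ x : E3, f x := by
  rw [MeasureTheory.Measure.integral_comp_smul volume f c]
  have h3 : Module.finrank ℝ E3 = 3 := by
    simp [finrank_euclideanSpace]
  rw [h3, hc, abs_of_nonneg (inv_nonneg.2 hZ.le), smul_eq_mul]

lemma tfScale_mem {Z : ℝ} (hZ : 0 < Z) {ρ : E3 → ℝ} (h : ρ ∈ TFdomain) :
    tfScale Z ρ ∈ TFdomain := by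
  obtain ⟨hm, hpos, hlp, hattr, hcoul⟩ := h
  set c : ℝ := Z ^ ((1:ℝ)/3) with hcdef
  have hc : 0 < c := Real.rpow_pos_of_pos hZ _
  refine ⟨?_, ?_, ?_, ?_, ?_⟩
  · exact (hm.comp (measurable_const_smul c)).const_mul _
  · intro x; exact mul_nonneg (by positivity) (hpos _)
  · refine MemLp.const_mul ?_ _
    have hmap : MemLp ρ (ENNReal.ofReal (5/3)) (Measure.map (c • ·) volume) := by
      rw [Measure.map_addHaar_smul volume hc.ne']
      exact hlp.smul_measure ENNReal.ofReal_ne_top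
    exact (memLp_map_measure_iff hm.aestronglyMeasurable
      (measurable_const_smul c).aemeasurable).1 hmap
  · have heq : (fun x : E3 => tfScale Z ρ x / ‖x‖)
        = fun x : E3 => (Z ^ 2 * c) * ((fun y : E3 => ρ y / ‖y‖) (c • x)) := by
      funext x
      have hn : ‖c • x‖ = c * ‖x‖ := by
        rw [norm_smul, Real.norm_eq_abs, abs_of_pos hc]
      simp only [tfScale, hn]
      rw [show Z ^ 2 * c * (ρ (c • x) / (c * ‖x‖))
          = Z ^ 2 * (c * (ρ (c • x) / (c * ‖x‖))) from by ring,
        key_div hc.ne']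
      ring
    rw [heq]
    exact ((integrable_comp_smul_iff volume (fun y : E3 => ρ y / ‖y‖) hc.ne').2 hattr).const_mul _
  · have heq : (fun p : E3 × E3 => tfScale Z ρ p.1 * tfScale Z ρ p.2 / ‖p.1 - p.2‖)
        = fun p : E3 × E3 => (Z ^ 4 * c) *
          ((fun q : E3 × E3 => ρ q.1 * ρ q.2 / ‖q.1 - q.2‖) (c • p)) := by
      funext p
      have hn : ‖c • p.1 - c • p.2‖ = c * ‖p.1 - p.2‖ := by
        rw [← smul_sub, norm_smul, Real.norm_eq_abs, abs_of_pos hc]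
      simp only [Prod.smul_fst, Prod.smul_snd, hn]
      rw [show Z ^ 4 * c * (ρ (c • p.1) * ρ (c • p.2) / (c * ‖p.1 - p.2‖))
          = Z ^ 4 * (c * (ρ (c • p.1) * ρ (c • p.2) / (c * ‖p.1 - p.2‖))) from by ring,
        key_div hc.ne']
      simp only [tfScale]
      ring
    rw [heq]
    exact ((integrable_comp_smul_iff volume
      (fun q : E3 × E3 => ρ q.1 * ρ q.2 / ‖q.1 - q.2‖) hc.ne').2 hcoul).const_mul _

lemma tfScale_inv {Z : ℝ} (hZ : 0 < Z) (ρ : E3 → ℝ) :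
    tfScale Z (tfScale Z⁻¹ ρ) = ρ := by
  funext x
  have hc : (0:ℝ) < Z ^ ((1:ℝ)/3) := Real.rpow_pos_of_pos hZ _
  simp only [tfScale]
  rw [smul_smul, Real.inv_rpow hZ.le, inv_mul_cancel₀ hc.ne', one_smul]
  field_simp

lemma tf_scale_val (q : ℕ) {Z : ℝ} (hZ : 0 < Z) {ρ : E3 → ℝ} (hρ : ρ ∈ TFdomain) :
    TFfunctional q Z (tfScale Z ρ) = Z ^ ((7:ℝ)/3) * TFfunctional q 1 ρ := by
  set c : ℝ := Z ^ ((1:ℝ)/3) with hcdef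
  have hc : 0 < c := Real.rpow_pos_of_pos hZ _
  have hc3 : c ^ (3:ℕ) = Z := cube_rpow_third hZ
  have hZinv : Z⁻¹ = Z ^ (-1:ℝ) := (Real.rpow_neg_one Z).symm
  have h103 : Z ^ ((10:ℝ)/3) = Z ^ (3:ℕ) * c := by
    rw [hcdef, ← Real.rpow_natCast Z 3, ← Real.rpow_add hZ]
    norm_num
  have h73 : Z ^ ((10:ℝ)/3) * Z⁻¹ = Z ^ ((7:ℝ)/3) := by
    rw [hZinv, ← Real.rpow_add hZ]
    norm_num
  have hZ43 : Z ^ (4:ℕ) * c * Z⁻¹ = Z ^ ((10:ℝ)/3) := by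
    rw [hZinv, hcdef, ← Real.rpow_natCast Z 4, ← Real.rpow_add hZ, ← Real.rpow_add hZ]
    norm_num
  rw [TFfunctional, TFfunctional]
  have part1 : (∫ x : E3, ((3/10) * gammaTF q * tfScale Z ρ x ^ ((5:ℝ)/3)
        - (Z / ‖x‖) * tfScale Z ρ x))
      = Z ^ ((7:ℝ)/3) * ∫ x : E3, ((3/10) * gammaTF q * ρ x ^ ((5:ℝ)/3)
        - ((1:ℝ) / ‖x‖) * ρ x) := by
    have heq : (fun x : E3 => (3/10) * gammaTF q * tfScale Z ρ x ^ ((5:ℝ)/3)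
          - (Z / ‖x‖) * tfScale Z ρ x)
        = fun x : E3 => Z ^ ((10:ℝ)/3) *
          ((fun y : E3 => (3/10) * gammaTF q * ρ y ^ ((5:ℝ)/3) - ((1:ℝ) / ‖y‖) * ρ y) (c • x)) := by
      funext x
      have hn : ‖c • x‖ = c * ‖x‖ := by
        rw [norm_smul, Real.norm_eq_abs, abs_of_pos hc]
      simp only [tfScale, hn]
      have hk : (Z ^ 2 * ρ (c • x)) ^ ((5:ℝ)/3)
          = Z ^ ((10:ℝ)/3) * ρ (c • x) ^ ((5:ℝ)/3) := by
        rw [Real.mul_rpow (by positivity) (hρ.2.1 _), ← Real.rpow_natCast Z 2,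
          ← Real.rpow_mul hZ.le]
        norm_num
      have ha : (Z / ‖x‖) * (Z ^ 2 * ρ (c • x))
          = Z ^ ((10:ℝ)/3) * (((1:ℝ) / (c * ‖x‖)) * ρ (c • x)) := by
        rw [h103, show Z ^ (3:ℕ) * c * (1 / (c * ‖x‖) * ρ (c • x))
            = Z ^ (3:ℕ) * (c * (ρ (c • x) / (c * ‖x‖))) from by ring,
          key_div hc.ne']
        ring
      rw [hk, ha]
      ring
    rw [heq, integral_const_mul,
      integral_scale hZ hc3 (fun y : E3 => (3/10) * gammaTF q * ρ y ^ ((5:ℝ)/3)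
        - ((1:ℝ) / ‖y‖) * ρ y),
      ← mul_assoc, h73]
  have part2 : coulD (tfScale Z ρ) (tfScale Z ρ) = Z ^ ((7:ℝ)/3) * coulD ρ ρ := by
    rw [coulD, coulD]
    have inner_eq : ∀ x : E3,
        (∫ y : E3, tfScale Z ρ x * tfScale Z ρ y / ‖x - y‖)
          = Z ^ ((10:ℝ)/3) * ((fun z : E3 => ∫ y : E3, ρ z * ρ y / ‖z - y‖) (c • x)) := by
      intro x
      have heq : (fun y : E3 => tfScale Z ρ x * tfScale Z ρ y / ‖x - y‖)
          = fun y : E3 => (Z ^ 4 * c) *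
            ((fun z : E3 => ρ (c • x) * ρ z / ‖c • x - z‖) (c • y)) := by
        funext y
        have hn : ‖c • x - c • y‖ = c * ‖x - y‖ := by
          rw [← smul_sub, norm_smul, Real.norm_eq_abs, abs_of_pos hc]
        simp only [tfScale, hn]
        rw [show Z ^ 4 * c * (ρ (c • x) * ρ (c • y) / (c * ‖x - y‖))
            = Z ^ 4 * (c * (ρ (c • x) * ρ (c • y) / (c * ‖x - y‖))) from by ring,
          key_div hc.ne']
        ring
      rw [heq, integral_const_mul,
        integral_scale hZ hc3 (fun z : E3 => ρ (c • x) * ρ z / ‖c • x - z‖),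
        ← mul_assoc, hZ43]
    have houter : (∫ x : E3, ∫ y : E3, tfScale Z ρ x * tfScale Z ρ y / ‖x - y‖)
        = Z ^ ((7:ℝ)/3) * ∫ x : E3, ∫ y : E3, ρ x * ρ y / ‖x - y‖ := by
      rw [show (fun x : E3 => ∫ y : E3, tfScale Z ρ x * tfScale Z ρ y / ‖x - y‖)
          = fun x : E3 => Z ^ ((10:ℝ)/3) *
            ((fun z : E3 => ∫ y : E3, ρ z * ρ y / ‖z - y‖) (c • x)) from funext inner_eq,
        integral_const_mul,
        integral_scale hZ hc3 (fun z : E3 => ∫ y : E3, ρ z * ρ y / ‖z - y‖),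
        ← mul_assoc, h73]
    rw [houter]
    ring
  rw [part1, part2]
  ring

/-- Scaling of the Thomas–Fermi energy: `E^{TF}(Z) = Z^{7/3} E^{TF}(1)`. -/
theorem TFenergy_scaling (q : ℕ) (hq : 1 ≤ q) (Z : ℝ) (hZ : 0 < Z) :
    TFenergy q Z = Z ^ ((7:ℝ)/3) * TFenergy q 1 := by
  have key : TFfunctional q Z '' TFdomain
      = (fun e => Z ^ ((7:ℝ)/3) * e) '' (TFfunctional q 1 '' TFdomain) := by
    ext e
    simp only [Set.mem_image]
    constructor
    · rintro ⟨ρ', hρ', rfl⟩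
      have hmem := tfScale_mem (inv_pos.2 hZ) hρ'
      refine ⟨TFfunctional q 1 (tfScale Z⁻¹ ρ'), ⟨tfScale Z⁻¹ ρ', hmem, rfl⟩, ?_⟩
      rw [← tf_scale_val q hZ hmem, tfScale_inv hZ ρ']
    · rintro ⟨e1, ⟨ρ, hρ, rfl⟩, rfl⟩
      exact ⟨tfScale Z ρ, tfScale_mem hZ hρ, tf_scale_val q hZ hρ⟩
  have him : (fun e => Z ^ ((7:ℝ)/3) * e) '' (TFfunctional q 1 '' TFdomain)
      = Z ^ ((7:ℝ)/3) • (TFfunctional q 1 '' TFdomain : Set ℝ) := by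
    rw [← Set.image_smul]
    simp only [smul_eq_mul]
  rw [TFenergy, TFenergy, key, him,
    Real.sInf_smul_of_nonneg (Real.rpow_pos_of_pos hZ _).le, smul_eq_mul]
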